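/- Let {𝓗,Γ} be an isometric boundary pair for A* with γ-field γ, A₀ = ker Γ₀ and H(λ) as in the context, and let λ ∈ ℂ∖ℝ. Then: whenever h ∈ ran(A₀−λ) and (H(λ)h,(k,k')) ∈ Γ, there exists k'' ∈ 𝓗 with (h,k'') ∈ γ(conj λ)* and (k, k'−k'') ∈ mul Γ; in particular, if mul Γ₁ = {0}, then Γ₁∘H(λ) ⊆ γ(conj λ)*. Furthermore: (i) if γ(conj λ) is densely defined for some λ ∈ ℂ∖ℝ, then γ(conj λ)* is a closed single-valued operator, and if in addition mul Γ₁ = {0}, then Γ₁∘H(λ) is a closable operator; (ii) if A₀ is essentially selfadjoint, then γ(conj λ) is a closable operator for every λ ∈ ℂ∖ℝ; (iii) if A₀ is selfadjoint, then dom γ(conj λ)* = 𝔥 and γ(conj λ) is a bounded operator, for every λ ∈ ℂ∖ℝ. -/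

import Mathlib

noncomputable section

open Filter Topology

namespace BT

local notation "⟪" x ", " y "⟫" => @inner ℂ _ _ x y

section Ops
variable {α β γ' : Type*}

def domR (T : Set (α × β)) : Set α := {x | ∃ y, (x, y) ∈ T}
def ranR (T : Set (α × β)) : Set β := {y | ∃ x, (x, y) ∈ T}
def kerR [Zero β] (T : Set (α × β)) : Set α := {x | (x, (0 : β)) ∈ T}
def mulR [Zero α] (T : Set (α × β)) : Set β := {y | ((0 : α), y) ∈ T}
def invR (T : Set (α × β)) : Set (β × α) := {p | (p.2, p.1) ∈ T}
def compR (T₂ : Set (β × γ')) (T₁ : Set (α × β)) : Set (α × γ') :=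
  {p | ∃ y, (p.1, y) ∈ T₁ ∧ (y, p.2) ∈ T₂}
def csum [Add α] [Add β] (T₁ T₂ : Set (α × β)) : Set (α × β) :=
  {p | ∃ q ∈ T₁, ∃ r ∈ T₂, p = (q.1 + r.1, q.2 + r.2)}

def IsLinRel {M : Type*} [AddCommGroup M] [Module ℂ M] (s : Set M) : Prop :=
  ∃ p : Submodule ℂ M, (p : Set M) = s

def IsBddRel [Norm α] [Norm β] (T : Set (α × β)) : Prop :=
  ∃ C : ℝ, ∀ p ∈ T, ‖p.2‖ ≤ C * ‖p.1‖

def BddInv [NormedAddCommGroup α] (T : Set (α × α)) : Prop :=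
  (∀ v, ∃ p ∈ T, p.2 = v) ∧ (∀ p ∈ T, ∀ q ∈ T, p.2 = q.2 → p.1 = q.1) ∧
    ∃ C : ℝ, ∀ p ∈ T, ‖p.1‖ ≤ C * ‖p.2‖
end Ops

section Shifts
variable {α : Type*} [AddCommGroup α] [Module ℂ α]

def shiftSub (T : Set (α × α)) (l : ℂ) : Set (α × α) :=
  {p | ∃ q ∈ T, p = (q.1, q.2 - l • q.1)}
def shiftAdd (T : Set (α × α)) (l : ℂ) : Set (α × α) :=
  {p | ∃ q ∈ T, p = (q.1, q.2 + l • q.1)}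
def hatN (T : Set (α × α)) (l : ℂ) : Set (α × α) := {p ∈ T | p.2 = l • p.1}
def Nlam (T : Set (α × α)) (l : ℂ) : Set α := {f | (f, l • f) ∈ T}
def Hrel (A0s : Set (α × α)) (l : ℂ) : Set (α × (α × α)) :=
  {q | q.2 ∈ A0s ∧ q.2.2 - l • q.2.1 = q.1}
end Shifts

section InnerDefs
variable {E F : Type*} [NormedAddCommGroup E] [InnerProductSpace ℂ E]
  [NormedAddCommGroup F] [InnerProductSpace ℂ F]

def adjR (S : Set (F × E)) : Set (E × F) :=
  {p | ∀ q ∈ S, ⟪p.1, q.2⟫ = ⟪p.2, q.1⟫}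

def IsClosedSymRel (A : Set (E × E)) : Prop :=
  IsLinRel A ∧ IsClosed A ∧ A ⊆ adjR A

def kIP (p q : E × E) : ℂ := -Complex.I * ⟪q.1, p.2⟫ + Complex.I * ⟪q.2, p.1⟫

def kreinOrth (S : Set (E × E)) : Set (E × E) := {v | ∀ u ∈ S, kIP u v = 0}

def GreenPair (Γ : Set ((E × E) × (F × F))) : Prop :=
  ∀ p ∈ Γ, ∀ q ∈ Γ,
    ⟪q.1.1, p.1.2⟫ - ⟪q.1.2, p.1.1⟫ = ⟪q.2.1, p.2.2⟫ - ⟪q.2.2, p.2.1⟫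

def G0 (Γ : Set ((E × E) × (F × F))) : Set ((E × E) × F) := {p | ∃ h', (p.1, (p.2, h')) ∈ Γ}
def G1 (Γ : Set ((E × E) × (F × F))) : Set ((E × E) × F) := {p | ∃ h, (p.1, (h, p.2)) ∈ Γ}
def A0 (Γ : Set ((E × E) × (F × F))) : Set (E × E) := kerR (G0 Γ)
def A1 (Γ : Set ((E × E) × (F × F))) : Set (E × E) := kerR (G1 Γ)
def weyl (Γ : Set ((E × E) × (F × F))) (l : ℂ) : Set (F × F) :=
  {p | ∃ f : E, ((f, l • f), p) ∈ Γ}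
def gfield (Γ : Set ((E × E) × (F × F))) (l : ℂ) : Set (F × E) :=
  {p | ∃ h', ((p.2, l • p.2), (p.1, h')) ∈ Γ}

def kreinAdj (Γ : Set ((E × E) × (F × F))) : Set ((F × F) × (E × E)) :=
  {q | ∀ p ∈ Γ, kIP p.1 q.2 = kIP p.2 q.1}

def IsIsomPair (A : Set (E × E)) (Γ : Set ((E × E) × (F × F))) : Prop :=
  IsLinRel Γ ∧ domR Γ ⊆ adjR A ∧ GreenPair Γ
def IsDomDense (A : Set (E × E)) (Γ : Set ((E × E) × (F × F))) : Prop :=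
  closure (domR Γ) = adjR A
def IsABPair (A : Set (E × E)) (Γ : Set ((E × E) × (F × F))) : Prop :=
  IsIsomPair A Γ ∧ IsDomDense A Γ ∧ Dense (ranR (G0 Γ)) ∧ A0 Γ = adjR (A0 Γ)
def IsBPair (A : Set (E × E)) (Γ : Set ((E × E) × (F × F))) : Prop :=
  IsABPair A Γ ∧ ranR (G0 Γ) = Set.univ
def IsUnitaryPair (A : Set (E × E)) (Γ : Set ((E × E) × (F × F))) : Prop :=
  GreenPair Γ ∧ domR Γ ⊆ adjR A ∧ IsDomDense A Γ ∧ invR Γ = kreinAdj Γ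
def IsUnitaryBT (A : Set (E × E)) (Γ : Set ((E × E) × (F × F))) : Prop :=
  IsUnitaryPair A Γ ∧ mulR Γ = {0}
def IsOrdinaryBT (A : Set (E × E)) (Γ : Set ((E × E) × (F × F))) : Prop :=
  IsIsomPair A Γ ∧ mulR Γ = {0} ∧ domR Γ = adjR A ∧ ranR Γ = Set.univ

def Erel (Γ : Set ((E × E) × (F × F))) (m : ℂ) : Set (F × F) :=
  {p | ∃ u' v', (p.1, u') ∈ weyl Γ m ∧ (p.1, v') ∈ weyl Γ ((starRingEnd ℂ) m) ∧
        p.2 = (2 : ℂ)⁻¹ • (u' + v')}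

def triTransform (Γ : Set ((E × E) × (F × F))) (e : Set (F × F)) :
    Set ((E × E) × (F × F)) :=
  {q | ∃ h h' w, (q.1, (h, h')) ∈ Γ ∧ (h, w) ∈ e ∧ q.2 = (h, w + h')}

def formVal (l : ℂ) (u u' : F) : ℝ :=
  ((l - (starRingEnd ℂ) l)⁻¹ * (⟪u, u'⟫ - ⟪u', u⟫)).re

def FormClosable (l : ℂ) (Ms : Set (F × F)) : Prop :=
  ∀ u u' : ℕ → F, (∀ n, (u n, u' n) ∈ Ms) →
    Tendsto u atTop (nhds (0 : F)) →
    Tendsto (fun nm : ℕ × ℕ => formVal l (u nm.1 - u nm.2) (u' nm.1 - u' nm.2)) atTop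
      (nhds (0 : ℝ)) →
    Tendsto (fun n => formVal l (u n) (u' n)) atTop (nhds (0 : ℝ))

def formClosureDom (l : ℂ) (Ms : Set (F × F)) : Set F :=
  {v | ∃ u u' : ℕ → F, (∀ n, (u n, u' n) ∈ Ms) ∧ Tendsto u atTop (nhds v) ∧
    Tendsto (fun nm : ℕ × ℕ => formVal l (u nm.1 - u nm.2) (u' nm.1 - u' nm.2)) atTop
      (nhds (0 : ℝ))}

end InnerDefs

section CompleteDefs
variable {F : Type*} [NormedAddCommGroup F] [InnerProductSpace ℂ F] [CompleteSpace F]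

def IsNevFun (M₀ : ℂ → F →L[ℂ] F) : Prop :=
  DifferentiableOn ℂ M₀ {l : ℂ | l.im ≠ 0} ∧
  (∀ l : ℂ, l.im ≠ 0 → M₀ ((starRingEnd ℂ) l) = ContinuousLinearMap.adjoint (M₀ l)) ∧
  (∀ l : ℂ, 0 < l.im → ∀ u, 0 ≤ (⟪u, M₀ l u⟫).im)

def ImOp (Tb : F →L[ℂ] F) : F →L[ℂ] F :=
  ((2 : ℂ) * Complex.I)⁻¹ • (Tb - ContinuousLinearMap.adjoint Tb)

end CompleteDefs

variable {E F : Type*} [NormedAddCommGroup E] [InnerProductSpace ℂ E] [CompleteSpace E]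
  [NormedAddCommGroup F] [InnerProductSpace ℂ F] [CompleteSpace F]


section Helpers2

lemma adjR_isClosed' {G H : Type*} [NormedAddCommGroup G] [InnerProductSpace ℂ G]
    [NormedAddCommGroup H] [InnerProductSpace ℂ H] (S : Set (H × G)) :
    IsClosed (adjR S) := by
  have : adjR S = ⋂ q ∈ S, {p : G × H | ⟪p.1, q.2⟫ - ⟪p.2, q.1⟫ = 0} := by
    ext p; simp [adjR, sub_eq_zero]
  rw [this]
  exact isClosed_biInter fun q _ => isClosed_eq
    ((continuous_fst.inner continuous_const).sub (continuous_snd.inner continuous_const))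
    continuous_const

lemma adjR_mem_closure' {G H : Type*} [NormedAddCommGroup G] [InnerProductSpace ℂ G]
    [NormedAddCommGroup H] [InnerProductSpace ℂ H] {S : Set (H × G)} {p : G × H}
    (hp : p ∈ adjR S) {q : H × G} (hq : q ∈ closure S) : ⟪p.1, q.2⟫ = ⟪p.2, q.1⟫ := by
  have hcl : IsClosed {r : H × G | ⟪p.1, r.2⟫ - ⟪p.2, r.1⟫ = 0} :=
    isClosed_eq ((continuous_const.inner continuous_snd).sub
      (continuous_const.inner continuous_fst)) continuous_const
  have hsub : S ⊆ {r : H × G | ⟪p.1, r.2⟫ - ⟪p.2, r.1⟫ = 0} :=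
    fun r hr => sub_eq_zero.mpr (hp r hr)
  exact sub_eq_zero.mp (closure_minimal hsub hcl hq)

def adjRSub {G H : Type*} [NormedAddCommGroup G] [InnerProductSpace ℂ G]
    [NormedAddCommGroup H] [InnerProductSpace ℂ H] (S : Set (H × G)) :
    Submodule ℂ (G × H) where
  carrier := adjR S
  add_mem' := by
    intro a b ha hb q hq
    simp only [Prod.fst_add, Prod.snd_add, inner_add_left]
    rw [ha q hq, hb q hq]
  zero_mem' := by intro q hq; simp
  smul_mem' := by
    intro c a ha q hq
    simp only [Prod.smul_fst, Prod.smul_snd, inner_smul_left]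
    rw [ha q hq]

lemma cancel_lam {G : Type*} [NormedAddCommGroup G] [InnerProductSpace ℂ G]
    {l : ℂ} (hl : l.im ≠ 0) {f : G}
    (h : ⟪f, (starRingEnd ℂ) l • f⟫ = ⟪(starRingEnd ℂ) l • f, f⟫) : f = 0 := by
  simp only [inner_smul_right, inner_smul_left, Complex.conj_conj] at h
  have hne : (starRingEnd ℂ) l ≠ l := fun hc => hl (Complex.conj_eq_iff_im.mp hc)
  rcases eq_or_ne (⟪f, f⟫ : ℂ) 0 with h0 | h0
  · exact inner_self_eq_zero.mp h0
  · exact absurd (mul_right_cancel₀ h0 h) hne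

lemma green_key {E F : Type*} [NormedAddCommGroup E] [InnerProductSpace ℂ E]
    [NormedAddCommGroup F] [InnerProductSpace ℂ F]
    {Γ : Set ((E × E) × (F × F))} (hG : GreenPair Γ) {l : ℂ}
    {p : E × E} {m : F} (hp : (p, ((0 : F), m)) ∈ Γ)
    {g : E} {u u' : F} (hq : ((g, (starRingEnd ℂ) l • g), (u, u')) ∈ Γ) :
    ⟪g, p.2 - l • p.1⟫ = ⟪u, m⟫ := by
  have h := hG _ hp _ hq
  simp only [inner_sub_right, inner_smul_left, inner_smul_right, inner_zero_right,
    Complex.conj_conj] at h ⊢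
  linear_combination h

lemma adj_mem_of_A0 {E F : Type*} [NormedAddCommGroup E] [InnerProductSpace ℂ E]
    [NormedAddCommGroup F] [InnerProductSpace ℂ F]
    {Γ : Set ((E × E) × (F × F))} (hG : GreenPair Γ) {l : ℂ}
    {p : E × E} {m : F} (hp : (p, ((0 : F), m)) ∈ Γ) :
    (p.2 - l • p.1, m) ∈ adjR (gfield Γ ((starRingEnd ℂ) l)) := by
  rintro ⟨u, g⟩ ⟨u', hq⟩
  have h1 := green_key hG hp hq
  show ⟪p.2 - l • p.1, g⟫ = ⟪m, u⟫
  rw [← inner_conj_symm (p.2 - l • p.1) g, h1, inner_conj_symm]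

lemma sym_lower {E : Type*} [NormedAddCommGroup E] [InnerProductSpace ℂ E]
    {l : ℂ} {e e' : E} (hsym : ⟪e, e'⟫ = ⟪e', e⟫) :
    |l.im| * ‖e‖ ≤ ‖e' - l • e‖ := by
  rcases eq_or_ne e 0 with rfl | he
  · simp
  have hre : (⟪e, e'⟫ : ℂ).im = 0 := by
    apply Complex.conj_eq_iff_im.mp
    rw [inner_conj_symm, ← hsym]
  have hkey : (⟪e, e' - l • e⟫ : ℂ).im = - (l.im * ‖e‖ ^ 2) := by
    rw [inner_sub_right, inner_smul_right, inner_self_eq_norm_sq_to_K]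
    simp [Complex.sub_im, Complex.mul_im, hre, Complex.ofReal_re, Complex.ofReal_im,
      ← Complex.ofReal_pow]
  have h2 : |(⟪e, e' - l • e⟫ : ℂ).im| ≤ ‖(⟪e, e' - l • e⟫ : ℂ)‖ := by
    exact Complex.abs_im_le_norm _
  have h3 := norm_inner_le_norm (𝕜 := ℂ) e (e' - l • e)
  rw [hkey, abs_neg, abs_mul, abs_of_nonneg (by positivity : (0:ℝ) ≤ ‖e‖ ^ 2)] at h2
  have hepos : 0 < ‖e‖ := norm_pos_iff.mpr he
  nlinarith [h2.trans h3]

lemma selfadj_surj {E : Type*} [NormedAddCommGroup E] [InnerProductSpace ℂ E]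
    [CompleteSpace E] {S : Set (E × E)} (hS : S = adjR S) {l : ℂ} (hl : l.im ≠ 0) :
    ∀ h : E, ∃ p ∈ S, p.2 - l • p.1 = h := by
  have hcl : IsClosed S := by rw [hS]; exact adjR_isClosed' S
  set P : Submodule ℂ (E × E) := adjRSub S with hPdef
  have hPS : (P : Set (E × E)) = S := hS.symm
  have hsym : ∀ p ∈ S, ⟪p.1, p.2⟫ = ⟪p.2, p.1⟫ := by
    intro p hp
    have hp' : p ∈ adjR S := hS ▸ hp
    exact hp' p hp
  have hPcl : IsClosed (P : Set (E × E)) := hPS ▸ hcl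
  haveI : CompleteSpace ↥P := hPcl.completeSpace_coe
  let f0 : ↥P →ₗ[ℂ] E :=
    { toFun := fun p => (p : E × E).2 - l • (p : E × E).1
      map_add' := by
        intro a b
        simp only [Submodule.coe_add, Prod.fst_add, Prod.snd_add, smul_add]
        try abel
      map_smul' := by
        intro c a
        simp only [Submodule.coe_smul, Prod.smul_fst, Prod.smul_snd, RingHom.id_apply,
          smul_sub, smul_comm l c] }
  have hbound : ∀ p : ↥P, ‖f0 p‖ ≤ (1 + ‖l‖) * ‖p‖ := by
    intro p
    have h1 : ‖(p : E × E).1‖ ≤ ‖p‖ := norm_fst_le (p : E × E)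
    have h2 : ‖(p : E × E).2‖ ≤ ‖p‖ := norm_snd_le (p : E × E)
    calc ‖(p : E × E).2 - l • (p : E × E).1‖
        ≤ ‖(p : E × E).2‖ + ‖l • (p : E × E).1‖ := norm_sub_le _ _
      _ = ‖(p : E × E).2‖ + ‖l‖ * ‖(p : E × E).1‖ := by rw [norm_smul]
      _ ≤ ‖p‖ + ‖l‖ * ‖p‖ := by gcongr
      _ = (1 + ‖l‖) * ‖p‖ := by ring
  let f : ↥P →L[ℂ] E := f0.mkContinuous _ hbound
  have hb : (0:ℝ) < |l.im| := abs_pos.mpr hl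
  have hlow : ∀ p : ↥P, |l.im| * ‖(p : E × E).1‖ ≤ ‖f p‖ := by
    intro p
    have hpS : (p : E × E) ∈ S := by rw [← hPS]; exact p.2
    exact sym_lower (hsym _ hpS)
  set K : ℝ := |l.im|⁻¹ + (1 + ‖l‖ * |l.im|⁻¹) with hKdef
  have hK0 : 0 ≤ K := by positivity
  have hanti : ∀ p : ↥P, ‖p‖ ≤ K * ‖f p‖ := by
    intro p
    have h1 : ‖(p : E × E).1‖ ≤ |l.im|⁻¹ * ‖f p‖ := by
      rw [inv_mul_eq_div, le_div_iff₀ hb]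
      calc ‖(p : E × E).1‖ * |l.im| = |l.im| * ‖(p : E × E).1‖ := by ring
        _ ≤ ‖f p‖ := hlow p
    have h2 : ‖(p : E × E).2‖ ≤ ‖f p‖ + ‖l‖ * ‖(p : E × E).1‖ := by
      have he : (p : E × E).2 = f p + l • (p : E × E).1 := by
        show (p : E × E).2 = (p : E × E).2 - l • (p : E × E).1 + l • (p : E × E).1
        abel
      rw [he]
      exact (norm_add_le _ _).trans_eq (by rw [norm_smul])
    have hfp : (0:ℝ) ≤ ‖f p‖ := norm_nonneg _
    have hnorm : ‖p‖ = max ‖(p : E × E).1‖ ‖(p : E × E).2‖ := rfl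
    rw [hnorm, hKdef]
    have hln : (0:ℝ) ≤ ‖l‖ := norm_nonneg l
    have hinv : (0:ℝ) ≤ |l.im|⁻¹ := inv_nonneg.mpr hb.le
    apply max_le
    · nlinarith [mul_nonneg (mul_nonneg hln hinv) hfp]
    · nlinarith [mul_le_mul_of_nonneg_left h1 hln, mul_nonneg hinv hfp]
  have hantiK : AntilipschitzWith (Real.toNNReal K) f :=
    f.antilipschitz_of_bound fun p => by
      rw [Real.coe_toNNReal K hK0]; exact hanti p
  have hclr : IsClosed (Set.range f) := hantiK.isClosed_range f.uniformContinuous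
  set Q : Submodule ℂ E := LinearMap.range f0 with hQdef
  have hQr : (Q : Set E) = Set.range f := by
    rw [hQdef, LinearMap.coe_range]; rfl
  have hQcl : IsClosed (Q : Set E) := hQr ▸ hclr
  haveI : CompleteSpace ↥Q := hQcl.completeSpace_coe
  have horth : Qᗮ = ⊥ := by
    rw [Submodule.eq_bot_iff]
    intro v hv
    have hv' : ∀ p ∈ S, ⟪p.2 - l • p.1, v⟫ = (0:ℂ) := by
      intro p hp
      have hpP : p ∈ P := by rw [← hPS] at hp; exact hp
      exact (Submodule.mem_orthogonal _ _).mp hv _ ⟨⟨p, hpP⟩, rfl⟩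
    have hvadj : (v, (starRingEnd ℂ) l • v) ∈ adjR S := by
      intro q hq
      have h0 := hv' q hq
      have h1 : ⟪v, q.2 - l • q.1⟫ = (0:ℂ) := by
        rw [← inner_conj_symm v (q.2 - l • q.1), h0, map_zero]
      rw [inner_sub_right, sub_eq_zero] at h1
      show ⟪v, q.2⟫ = ⟪(starRingEnd ℂ) l • v, q.1⟫
      rw [h1, inner_smul_right, inner_smul_left, Complex.conj_conj]
    have hvS : (v, (starRingEnd ℂ) l • v) ∈ S := by rw [hS]; exact hvadj
    exact cancel_lam hl (hsym _ hvS)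
  have hQtop : Q = ⊤ := Submodule.orthogonal_eq_bot_iff.mp horth
  intro h
  have hh : h ∈ Q := by rw [hQtop]; exact Submodule.mem_top
  obtain ⟨p, hp⟩ := hh
  refine ⟨(p : E × E), by rw [← hPS]; exact p.2, hp⟩

end Helpers2

/-- the relation `Γ₁ ∘ H(λ)` and the adjoint of the γ-field at `conj λ`
for an isometric boundary pair; closability and boundedness consequences. -/
theorem statement2 (A : Set (E × E)) (Γ : Set ((E × E) × (F × F)))
    (hA : IsClosedSymRel A) (hΓ : IsIsomPair A Γ) :
    -- main inclusion (with a multivalued correction term)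
    (∀ l : ℂ, l.im ≠ 0 →
       ∀ (h : E) (p : E × E) (k k' : F), (h, p) ∈ Hrel (A0 Γ) l → (p, (k, k')) ∈ Γ →
         ∃ k'' : F, (h, k'') ∈ adjR (gfield Γ ((starRingEnd ℂ) l)) ∧
           (k, k' - k'') ∈ mulR Γ) ∧
    -- in particular, if `mul Γ₁ = {0}`, then `Γ₁ ∘ H(λ) ⊆ γ(conj λ)*`
    (∀ l : ℂ, l.im ≠ 0 → mulR (G1 Γ) = {(0 : F)} →
       compR (G1 Γ) (Hrel (A0 Γ) l) ⊆ adjR (gfield Γ ((starRingEnd ℂ) l))) ∧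
    -- (i)
    (∀ l : ℂ, l.im ≠ 0 → Dense (domR (gfield Γ ((starRingEnd ℂ) l))) →
       IsClosed (adjR (gfield Γ ((starRingEnd ℂ) l))) ∧
       mulR (adjR (gfield Γ ((starRingEnd ℂ) l))) = {(0 : F)} ∧
       (mulR (G1 Γ) = {(0 : F)} →
         mulR (closure (compR (G1 Γ) (Hrel (A0 Γ) l))) = {(0 : F)})) ∧
    -- (ii)
    (closure (A0 Γ) = adjR (A0 Γ) →
       ∀ l : ℂ, l.im ≠ 0 → mulR (closure (gfield Γ ((starRingEnd ℂ) l))) = {(0 : E)}) ∧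
    -- (iii)
    (A0 Γ = adjR (A0 Γ) →
       ∀ l : ℂ, l.im ≠ 0 →
         domR (adjR (gfield Γ ((starRingEnd ℂ) l))) = Set.univ ∧
         mulR (gfield Γ ((starRingEnd ℂ) l)) ⊆ {(0 : E)} ∧
         IsBddRel (gfield Γ ((starRingEnd ℂ) l))) := by
  obtain ⟨hlin, hdomΓ, hG⟩ := hΓ
  obtain ⟨PΓ, hPΓ⟩ := hlin
  have hzeroΓ : ((0 : E × E), (0 : F × F)) ∈ Γ := by
    rw [← hPΓ]; exact PΓ.zero_mem
  have hsubΓ : ∀ x y : (E × E) × (F × F), x ∈ Γ → y ∈ Γ → x - y ∈ Γ := by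
    intro x y hx hy
    rw [← hPΓ] at hx hy ⊢
    exact sub_mem hx hy
  -- part 1
  have main : ∀ l : ℂ, l.im ≠ 0 → ∀ (h : E) (p : E × E) (k k' : F),
      (h, p) ∈ Hrel (A0 Γ) l → (p, (k, k')) ∈ Γ →
      ∃ k'' : F, (h, k'') ∈ adjR (gfield Γ ((starRingEnd ℂ) l)) ∧
        (k, k' - k'') ∈ mulR Γ := by
    intro l hl h p k k' hH hpk
    obtain ⟨hpA0, hph⟩ := hH
    obtain ⟨m, hm⟩ := hpA0
    dsimp only at hph hm
    refine ⟨m, ?_, ?_⟩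
    · rw [← hph]
      exact adj_mem_of_A0 hG hm
    · have hsub := hsubΓ (p, (k, k')) (p, (0, m)) hpk hm
      show ((0 : E × E), (k, k' - m)) ∈ Γ
      simpa [Prod.sub_def] using hsub
  -- part 2
  have part2 : ∀ l : ℂ, l.im ≠ 0 → mulR (G1 Γ) = {(0 : F)} →
      compR (G1 Γ) (Hrel (A0 Γ) l) ⊆ adjR (gfield Γ ((starRingEnd ℂ) l)) := by
    intro l hl hmul1 q hq
    obtain ⟨h, k'⟩ := q
    obtain ⟨p, hH, k, hpk⟩ := hq
    obtain ⟨k'', hadj, hmulm⟩ := main l hl h p k k' hH hpk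
    have hmem : k' - k'' ∈ mulR (G1 Γ) := ⟨k, hmulm⟩
    rw [hmul1] at hmem
    have hk : k' = k'' := sub_eq_zero.mp hmem
    rw [hk]
    exact hadj
  refine ⟨main, part2, ?_, ?_, ?_⟩
  · -- (i)
    intro l hl hdense
    have hmulAdj : mulR (adjR (gfield Γ ((starRingEnd ℂ) l))) = {(0 : F)} := by
      apply Set.eq_singleton_iff_unique_mem.mpr
      constructor
      · intro q hq; simp
      · intro y hy
        have hperp : ∀ u ∈ domR (gfield Γ ((starRingEnd ℂ) l)), ⟪y, u⟫ = (0:ℂ) := by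
          rintro u ⟨g, hug⟩
          have h0 := hy (u, g) hug
          simpa using h0.symm
        have hC : IsClosed {u : F | ⟪y, u⟫ = (0:ℂ)} :=
          isClosed_eq (continuous_const.inner continuous_id) continuous_const
        have hall : ∀ u : F, ⟪y, u⟫ = (0:ℂ) := by
          intro u
          have h1 : closure (domR (gfield Γ ((starRingEnd ℂ) l))) ⊆
              {u : F | ⟪y, u⟫ = (0:ℂ)} := closure_minimal hperp hC
          have h2 : u ∈ closure (domR (gfield Γ ((starRingEnd ℂ) l))) := hdense u
          exact h1 h2
        exact inner_self_eq_zero.mp (hall y)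
    refine ⟨adjR_isClosed' _, hmulAdj, ?_⟩
    intro hmul1
    have hsub2 := part2 l hl hmul1
    apply Set.eq_singleton_iff_unique_mem.mpr
    constructor
    · apply subset_closure
      refine ⟨((0 : E), (0 : E)), ⟨⟨(0 : F), ?_⟩, by simp⟩, ⟨(0 : F), ?_⟩⟩
      · exact hzeroΓ
      · exact hzeroΓ
    · intro y hy
      have hcl : closure (compR (G1 Γ) (Hrel (A0 Γ) l)) ⊆
          adjR (gfield Γ ((starRingEnd ℂ) l)) :=
        closure_minimal hsub2 (adjR_isClosed' _)
      have : y ∈ mulR (adjR (gfield Γ ((starRingEnd ℂ) l))) := hcl hy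
      rw [hmulAdj] at this
      exact this
  · -- (ii)
    intro hclo l hl
    apply Set.eq_singleton_iff_unique_mem.mpr
    constructor
    · apply subset_closure
      refine ⟨(0 : F), ?_⟩
      show (((0 : E), (starRingEnd ℂ) l • (0 : E)), ((0 : F), (0 : F))) ∈ Γ
      simpa only [smul_zero, Prod.mk_zero_zero] using hzeroΓ
    · intro f hf
      obtain ⟨x, hx, hxlim⟩ := mem_closure_iff_seq_limit.mp hf
      have hgf : ∀ p ∈ A0 Γ, ⟪f, p.2 - l • p.1⟫ = (0:ℂ) := by
        intro p hp
        obtain ⟨m, hm⟩ := hp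
        have hseq : ∀ n, ⟪(x n).2, p.2 - l • p.1⟫ = ⟪(x n).1, m⟫ := by
          intro n
          obtain ⟨u', hu'⟩ := hx n
          exact green_key hG hm hu'
        have hx2 : Tendsto (fun n => (x n).2) atTop (𝓝 f) :=
          ((continuous_snd.tendsto (((0 : F), f) : F × E)).comp hxlim)
        have hx1 : Tendsto (fun n => (x n).1) atTop (𝓝 (0 : F)) :=
          ((continuous_fst.tendsto (((0 : F), f) : F × E)).comp hxlim)
        have h1 : Tendsto (fun n => ⟪(x n).2, p.2 - l • p.1⟫) atTop
            (𝓝 (⟪f, p.2 - l • p.1⟫ : ℂ)) :=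
          hx2.inner tendsto_const_nhds
        have h2 : Tendsto (fun n => ⟪(x n).1, m⟫) atTop (𝓝 (0:ℂ)) := by
          have h2' : Tendsto (fun n => ⟪(x n).1, m⟫) atTop (𝓝 (⟪(0 : F), m⟫ : ℂ)) :=
            hx1.inner tendsto_const_nhds
          simpa using h2'
        have h1' : Tendsto (fun n => ⟪(x n).1, m⟫) atTop
            (𝓝 (⟪f, p.2 - l • p.1⟫ : ℂ)) := h1.congr fun n => hseq n
        exact tendsto_nhds_unique h1' h2
      have hfadj : (f, (starRingEnd ℂ) l • f) ∈ adjR (A0 Γ) := by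
        intro q hq
        have h0 := hgf q hq
        rw [inner_sub_right, sub_eq_zero] at h0
        show ⟪f, q.2⟫ = ⟪(starRingEnd ℂ) l • f, q.1⟫
        rw [h0, inner_smul_right, inner_smul_left, Complex.conj_conj]
      have hmemcl : (f, (starRingEnd ℂ) l • f) ∈ closure (A0 Γ) := by
        rw [hclo]; exact hfadj
      have hself := adjR_mem_closure' hfadj hmemcl
      exact cancel_lam hl hself
  · -- (iii)
    intro hsa l hl
    have hsurj := selfadj_surj hsa hl (l := l)
    have hdomadj : ∀ h : E, ∃ m : F, (h, m) ∈ adjR (gfield Γ ((starRingEnd ℂ) l)) := by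
      intro h
      obtain ⟨p, hpS, hph⟩ := hsurj h
      obtain ⟨m, hm⟩ := hpS
      exact ⟨m, hph ▸ adj_mem_of_A0 hG hm⟩
    have hmul0 : ∀ g : E, ((0 : F), g) ∈ gfield Γ ((starRingEnd ℂ) l) → g = 0 := by
      intro g hg
      obtain ⟨u', hu'⟩ := hg
      have hA0g : (g, (starRingEnd ℂ) l • g) ∈ A0 Γ := ⟨u', hu'⟩
      have hadjg : (g, (starRingEnd ℂ) l • g) ∈ adjR (A0 Γ) := by
        rw [← hsa]; exact hA0g
      exact cancel_lam hl (hadjg _ hA0g)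
    refine ⟨Set.eq_univ_of_forall fun h => hdomadj h, ?_, ?_⟩
    · intro g hg
      have := hmul0 g hg
      simp [this]
    · -- boundedness via Banach–Steinhaus
      set S := gfield Γ ((starRingEnd ℂ) l) with hSdef
      let ι := {p : F × E // p ∈ S ∧ p.1 ≠ 0}
      let gfun : ι → E →L[ℂ] ℂ := fun i => innerSL ℂ ((‖i.1.1‖ : ℂ)⁻¹ • i.1.2)
      have hpt : ∀ h : E, ∃ C : ℝ, ∀ i : ι, ‖gfun i h‖ ≤ C := by
        intro h
        obtain ⟨m, hm⟩ := hdomadj h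
        refine ⟨‖m‖, ?_⟩
        rintro ⟨⟨u, g⟩, hugS, hu0⟩
        have h1 : ⟪h, g⟫ = ⟪m, u⟫ := hm (u, g) hugS
        have hval : gfun ⟨(u, g), hugS, hu0⟩ h = ((‖u‖ : ℂ))⁻¹ * ⟪g, h⟫ := by
          simp [gfun, inner_smul_left]
        rw [hval]
        have hgh : ‖(⟪g, h⟫ : ℂ)‖ = ‖(⟪m, u⟫ : ℂ)‖ := by
          rw [← inner_conj_symm g h, h1]
          exact RCLike.norm_conj _
        have hun : (0:ℝ) < ‖u‖ := norm_pos_iff.mpr hu0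
        rw [norm_mul, hgh]
        have hmu : ‖(⟪m, u⟫ : ℂ)‖ ≤ ‖m‖ * ‖u‖ := norm_inner_le_norm (𝕜 := ℂ) m u
        have hni : ‖((‖u‖ : ℂ))⁻¹‖ = ‖u‖⁻¹ := by
          rw [norm_inv, Complex.norm_real, Real.norm_eq_abs, abs_of_nonneg (norm_nonneg u)]
        rw [hni]
        calc ‖u‖⁻¹ * ‖(⟪m, u⟫ : ℂ)‖ ≤ ‖u‖⁻¹ * (‖m‖ * ‖u‖) := by
              gcongr
          _ = ‖m‖ * (‖u‖⁻¹ * ‖u‖) := by ring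
          _ = ‖m‖ := by rw [inv_mul_cancel₀ hun.ne']; ring
      obtain ⟨C', hC'⟩ := banach_steinhaus hpt
      refine ⟨max C' 0, ?_⟩
      rintro ⟨u, g⟩ hug
      rcases eq_or_ne u 0 with rfl | hu0
      · have hg0 : g = 0 := hmul0 g hug
        simp [hg0]
      · have hb := hC' ⟨(u, g), hug, hu0⟩
        have hnorm : ‖gfun ⟨(u, g), hug, hu0⟩‖ = ‖u‖⁻¹ * ‖g‖ := by
          show ‖innerSL ℂ ((‖u‖ : ℂ)⁻¹ • g)‖ = ‖u‖⁻¹ * ‖g‖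
          rw [innerSL_apply_norm, norm_smul, norm_inv, Complex.norm_real,
            Real.norm_eq_abs, abs_of_nonneg (norm_nonneg u)]
        rw [hnorm] at hb
        have hun : (0:ℝ) < ‖u‖ := norm_pos_iff.mpr hu0
        show ‖g‖ ≤ max C' 0 * ‖u‖
        have h1 : ‖g‖ ≤ C' * ‖u‖ := by
          have h2 := mul_le_mul_of_nonneg_left hb hun.le
          rw [← mul_assoc, mul_inv_cancel₀ hun.ne', one_mul] at h2
          linarith
        exact h1.trans (by gcongr; exact le_max_left _ _)


end BT
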